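/- Let (α_j)_{j≥1} be a sequence of pairwise distinct complex numbers, and define the polynomials P_n by P_0(z) = 1 and P_n(z) = (z − α_{j_n}) P_{n−1}(z) for n ≥ 1, where j_n is determined by writing n = m_n(m_n+1)/2 + j_n with m_n ≥ 0 and 1 ≤ j_n ≤ m_n + 1. Let (C_n)_{n≥0} be positive constants with |P_n(z)| ≤ C_n · (max{|z|, 1})^n for all z ∈ ℂ. If (a_k)_{k≥0} and (b_k)_{k≥0} are sequences of complex numbers with |a_k| ≤ 1/(C_k · k!) and |b_k| ≤ 1/(C_k · k!) for all k, and ∑_{k=0}^∞ a_k P_k(z) = ∑_{k=0}^∞ b_k P_k(z) for all z ∈ ℂ, then a_k = b_k for every k ≥ 0. -/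

import Mathlib

open Polynomial Finset Metric

/-- The sequence of polynomials `P_0 = 1`, `P_n = (X - α_{j_n}) * P_{n-1}`. -/
noncomputable def Pseq (α : ℕ → ℂ) (j : ℕ → ℕ) : ℕ → Polynomial ℂ
  | 0 => 1
  | n + 1 => (Polynomial.X - Polynomial.C (α (j (n + 1)))) * Pseq α j n

lemma Pseq_eq_prod (α : ℕ → ℂ) (j : ℕ → ℕ) (n : ℕ) :
    Pseq α j n = ∏ i ∈ Finset.Ioc 0 n, (X - C (α (j i))) := by
  induction n with
  | zero => simp [Pseq]
  | succ n ih =>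
    rw [show Pseq α j (n+1) = (X - C (α (j (n + 1)))) * Pseq α j n from rfl, ih,
      Finset.prod_Ioc_succ_top (Nat.zero_le _)]
    ring

lemma Pseq_factor (α : ℕ → ℂ) (j : ℕ → ℕ) {K n : ℕ} (h : K ≤ n) :
    Pseq α j n = Pseq α j K * ∏ i ∈ Finset.Ioc K n, (X - C (α (j i))) := by
  rw [Pseq_eq_prod, Pseq_eq_prod, Finset.prod_Ioc_consecutive _ (Nat.zero_le K) h]

theorem stmt_9 (α : ℕ → ℂ)
    (hα : ∀ ⦃k l : ℕ⦄, 1 ≤ k → 1 ≤ l → α k = α l → k = l)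
    (m j : ℕ → ℕ)
    (hmj : ∀ n : ℕ, 1 ≤ n → 1 ≤ j n ∧ j n ≤ m n + 1 ∧ n = m n * (m n + 1) / 2 + j n)
    (C : ℕ → ℝ) (hCpos : ∀ n : ℕ, 0 < C n)
    (hPbound : ∀ n : ℕ, ∀ z : ℂ, ‖(Pseq α j n).eval z‖ ≤ C n * max ‖z‖ 1 ^ n)
    (a b : ℕ → ℂ)
    (ha : ∀ k : ℕ, ‖a k‖ ≤ 1 / (C k * k.factorial))
    (hb : ∀ k : ℕ, ‖b k‖ ≤ 1 / (C k * k.factorial))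
    (hab : ∀ z : ℂ, ∑' k : ℕ, a k * (Pseq α j k).eval z = ∑' k : ℕ, b k * (Pseq α j k).eval z) :
    ∀ k : ℕ, a k = b k := by
  set c : ℕ → ℂ := fun k => a k - b k with hcdef
  have hc : ∀ k, ‖c k‖ ≤ 2 / (C k * k.factorial) := by
    intro k
    have h1 : (0:ℝ) < C k * k.factorial :=
      mul_pos (hCpos k) (Nat.cast_pos.mpr (Nat.factorial_pos k))
    calc ‖c k‖ ≤ ‖a k‖ + ‖b k‖ := norm_sub_le _ _
      _ ≤ 1 / (C k * k.factorial) + 1 / (C k * k.factorial) := add_le_add (ha k) (hb k)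
      _ = 2 / (C k * k.factorial) := by ring
  have hsum : ∀ (d : ℕ → ℂ), (∀ k, ‖d k‖ ≤ 2 / (C k * k.factorial)) → ∀ z : ℂ,
      Summable (fun k => d k * (Pseq α j k).eval z) := by
    intro d hd z
    apply Summable.of_norm_bounded (g := fun k => 2 * (max ‖z‖ 1) ^ k / k.factorial)
    · simpa [mul_div_assoc] using (Real.summable_pow_div_factorial (max ‖z‖ 1)).mul_left 2
    · intro k
      have h1 : (0:ℝ) < C k * k.factorial :=
        mul_pos (hCpos k) (Nat.cast_pos.mpr (Nat.factorial_pos k))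
      rw [norm_mul]
      calc ‖d k‖ * ‖(Pseq α j k).eval z‖
          ≤ (2 / (C k * k.factorial)) * (C k * max ‖z‖ 1 ^ k) :=
            mul_le_mul (hd k) (hPbound k z) (norm_nonneg _)
              (le_of_lt (div_pos two_pos (mul_pos (hCpos k) (Nat.cast_pos.mpr (Nat.factorial_pos k)))))
        _ = 2 * (max ‖z‖ 1) ^ k / k.factorial := by
            field_simp [(hCpos k).ne']
  have hhalf : ∀ k, (1:ℝ) / (C k * k.factorial) ≤ 2 / (C k * k.factorial) := by
    intro k
    have h1 : (0:ℝ) < C k * k.factorial :=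
      mul_pos (hCpos k) (Nat.cast_pos.mpr (Nat.factorial_pos k))
    gcongr
    norm_num
  have ha2 : ∀ k, ‖a k‖ ≤ 2 / (C k * k.factorial) := fun k => (ha k).trans (hhalf k)
  have hb2 : ∀ k, ‖b k‖ ≤ 2 / (C k * k.factorial) := fun k => (hb k).trans (hhalf k)
  have hsumc : ∀ z : ℂ, Summable (fun k => c k * (Pseq α j k).eval z) := hsum c hc
  have hfz : ∀ z : ℂ, ∑' k, c k * (Pseq α j k).eval z = 0 := by
    intro z
    have h := Summable.tsum_sub (hsum a ha2 z) (hsum b hb2 z)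
    simp only [hcdef, sub_mul]
    rw [h, hab z, sub_self]
  -- main induction step
  have key : ∀ K : ℕ, (∀ k, k < K → c k = 0) → c K = 0 := by
    intro K IH
    set Q : ℕ → Polynomial ℂ := fun n => ∏ i ∈ Finset.Ioc K n, (X - Polynomial.C (α (j i)))
      with hQdef
    set w : ℂ := α (j (K + 1)) with hw
    set A : ℝ := ∑ i ∈ Finset.Ioc 0 K, ‖α (j i)‖ with hAdef
    have hA0 : 0 ≤ A := Finset.sum_nonneg fun i _ => norm_nonneg _
    have hPKlower : ∀ R : ℝ, 1 + A ≤ R → ∀ z : ℂ, ‖z‖ = R →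
        1 ≤ ‖(Pseq α j K).eval z‖ := by
      intro R hR z hz
      rw [Pseq_eq_prod, Polynomial.eval_prod, norm_prod]
      calc (1:ℝ) = ∏ _i ∈ Finset.Ioc 0 K, (1:ℝ) := by simp
        _ ≤ _ := ?_
      refine Finset.prod_le_prod (by simp) ?_
      intro i hi
      have hαi : ‖α (j i)‖ ≤ A := Finset.single_le_sum (f := fun i => ‖α (j i)‖) (fun i _ => norm_nonneg _) hi
      have h2 : ‖z‖ - ‖α (j i)‖ ≤ ‖z - α (j i)‖ := norm_sub_norm_le z (α (j i))
      simp only [Polynomial.eval_sub, Polynomial.eval_X, Polynomial.eval_C]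
      rw [hz] at h2
      linarith
    have hQbound : ∀ R : ℝ, 1 + A ≤ R → ∀ n, K ≤ n → ∀ x : ℂ, ‖x‖ ≤ R →
        ‖(Q n).eval x‖ ≤ C n * R ^ n := by
      intro R hR n hKn x hx
      have hR1 : (1:ℝ) ≤ R := by linarith
      have hRpos : (0:ℝ) < R := by linarith
      have hcl : x ∈ closure (Metric.ball (0:ℂ) R) := by
        rw [closure_ball 0 hRpos.ne']
        simpa [Metric.mem_closedBall, dist_zero_right] using hx
      refine Complex.norm_le_of_forall_mem_frontier_norm_le Metric.isBounded_ball
        ((Q n).differentiable.diffContOnCl) ?_ hcl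
      intro z hz
      rw [frontier_ball 0 hRpos.ne'] at hz
      have hznorm : ‖z‖ = R := by simpa [dist_zero_right] using hz
      have h1 : 1 ≤ ‖(Pseq α j K).eval z‖ := hPKlower R hR z hznorm
      have h2 : ‖(Pseq α j n).eval z‖ = ‖(Pseq α j K).eval z‖ * ‖(Q n).eval z‖ := by
        rw [Pseq_factor α j hKn, Polynomial.eval_mul, norm_mul]
      have h3 : ‖(Q n).eval z‖ ≤ ‖(Pseq α j n).eval z‖ := by
        rw [h2]
        exact le_mul_of_one_le_left (norm_nonneg _) h1
      calc ‖(Q n).eval z‖ ≤ C n * max ‖z‖ 1 ^ n := h3.trans (hPbound n z)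
        _ = C n * R ^ n := by rw [hznorm, max_eq_left hR1]
    set g : ℂ → ℂ := fun x => ∑' k : ℕ, c (k + K) * (Q (k + K)).eval x with hgdef
    have hu : ∀ R : ℝ, Summable (fun k : ℕ => 2 * R ^ (k + K) / ((k + K).factorial : ℝ)) := by
      intro R
      have h0 : Summable (fun n : ℕ => 2 * R ^ n / (n.factorial : ℝ)) := by
        simpa [mul_div_assoc] using (Real.summable_pow_div_factorial R).mul_left 2
      exact (summable_nat_add_iff K).mpr h0
    have hterm : ∀ R : ℝ, 1 + A ≤ R → ∀ (k : ℕ) (x : ℂ), ‖x‖ ≤ R →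
        ‖c (k + K) * (Q (k + K)).eval x‖ ≤ 2 * R ^ (k + K) / ((k + K).factorial : ℝ) := by
      intro R hR k x hx
      have h1 : (0:ℝ) < C (k + K) * (k + K).factorial :=
        mul_pos (hCpos _) (Nat.cast_pos.mpr (Nat.factorial_pos _))
      rw [norm_mul]
      calc ‖c (k + K)‖ * ‖(Q (k + K)).eval x‖
          ≤ (2 / (C (k + K) * (k + K).factorial)) * (C (k + K) * R ^ (k + K)) :=
            mul_le_mul (hc _) (hQbound R hR _ (Nat.le_add_left K k) x hx) (norm_nonneg _)
              (le_of_lt (div_pos two_pos h1))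
        _ = 2 * R ^ (k + K) / ((k + K).factorial : ℝ) := by
            field_simp [(hCpos (k + K)).ne']
    have hgcont : Continuous g := by
      rw [continuous_iff_continuousAt]
      intro x₀
      obtain ⟨R, hR1, hR2⟩ : ∃ R : ℝ, 1 + A ≤ R ∧ ‖x₀‖ + 1 ≤ R :=
        ⟨max (1 + A) (‖x₀‖ + 1), le_max_left _ _, le_max_right _ _⟩
      have hcont : ContinuousOn g (Metric.closedBall 0 R) :=
        continuousOn_tsum
          (fun k => (continuous_const.mul (Q (k + K)).continuous).continuousOn)
          (hu R) (fun k x hx => hterm R hR1 k x (by simpa [dist_zero_right] using hx))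
      refine hcont.continuousAt (Metric.closedBall_mem_nhds_of_mem ?_)
      simp only [Metric.mem_ball, dist_zero_right]
      linarith
    have hPK0 : Pseq α j K ≠ 0 := by
      have hmon : (Pseq α j K).Monic := by
        rw [Pseq_eq_prod]
        exact Polynomial.monic_prod_of_monic _ _ fun i _ => Polynomial.monic_X_sub_C _
      exact hmon.ne_zero
    have hdense : Dense {z : ℂ | (Pseq α j K).eval z ≠ 0} := by
      have hfin : {z : ℂ | (Pseq α j K).IsRoot z}.Finite := Polynomial.finite_setOf_isRoot hPK0
      have hd := hfin.countable.dense_compl ℂ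
      exact hd
    have hgz : ∀ z : ℂ, (Pseq α j K).eval z ≠ 0 → g z = 0 := by
      intro z hz
      have hhead : ∑ i ∈ Finset.range K, c i * (Pseq α j i).eval z = 0 := by
        apply Finset.sum_eq_zero
        intro i hi
        rw [IH i (Finset.mem_range.mp hi), zero_mul]
      have h := Summable.sum_add_tsum_nat_add K (hsumc z)
      rw [hfz z, hhead, zero_add] at h
      have hmul : (Pseq α j K).eval z * g z = 0 := by
        rw [hgdef, ← tsum_mul_left, ← h]
        congr 1
        funext k
        rw [Pseq_factor α j (Nat.le_add_left K k), Polynomial.eval_mul]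
        ring
      exact (mul_eq_zero.mp hmul).resolve_left hz
    have hgzero : g = fun _ => 0 :=
      Continuous.ext_on hdense hgcont continuous_const fun z hz => hgz z hz
    have hQk0 : ∀ k : ℕ, k ≠ 0 → (Q (k + K)).eval w = 0 := by
      intro k hk
      simp only [hQdef, Polynomial.eval_prod]
      apply Finset.prod_eq_zero (i := K + 1)
      · simp only [Finset.mem_Ioc]
        omega
      · simp [hw]
    have hgw : g w = c K := by
      have h0 : g w = ∑' k : ℕ, c (k + K) * (Q (k + K)).eval w := rfl
      rw [h0, tsum_eq_single 0 (fun k hk => by rw [hQk0 k hk, mul_zero])]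
      simp [hQdef]
    rw [← hgw, hgzero]
  have hczero : ∀ K, c K = 0 := by
    intro K
    induction K using Nat.strong_induction_on with
    | _ K IH => exact key K IH
  intro k
  have := hczero k
  simpa [hcdef, sub_eq_zero] using this
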